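/- For P, N > 0 with N < 2P, the function f(α) = (1/2)·log₂(1 + (1-α)²P / (N - 2α²P)) defined on 0 ≤ α < √(N/(2P)) attains its minimum at α = N/(2P), and the minimum value is (1/2)·log₂(1/2 + P/N). -/

import Mathlib

/-- The function `f(α) = (1/2)log₂(1 + (1-α)²P/(N - 2α²P))` on `0 ≤ α < √(N/(2P))`
attains its minimum at `α = N/(2P)`, with minimum value `(1/2)log₂(1/2 + P/N)`. -/
theorem stmt11 (P N : ℝ) (hP : 0 < P) (hN : 0 < N) (hNP : N < 2 * P) :
    (∀ α : ℝ, 0 ≤ α → α < Real.sqrt (N / (2 * P)) →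
      1 / 2 * Real.logb 2
          (1 + (1 - N / (2 * P)) ^ 2 * P / (N - 2 * (N / (2 * P)) ^ 2 * P)) ≤
        1 / 2 * Real.logb 2 (1 + (1 - α) ^ 2 * P / (N - 2 * α ^ 2 * P))) ∧
    1 / 2 * Real.logb 2
        (1 + (1 - N / (2 * P)) ^ 2 * P / (N - 2 * (N / (2 * P)) ^ 2 * P)) =
      1 / 2 * Real.logb 2 (1 / 2 + P / N) := by
  have h2P : (0:ℝ) < 2 * P := by linarith
  have harg : 1 + (1 - N / (2 * P)) ^ 2 * P / (N - 2 * (N / (2 * P)) ^ 2 * P)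
      = 1 / 2 + P / N := by
    have hden : N - 2 * (N / (2 * P)) ^ 2 * P = N * (2 * P - N) / (2 * P) := by
      field_simp
    have h2PN : 2 * P - N ≠ 0 := by linarith
    rw [hden]
    field_simp
    ring
  constructor
  · intro α hα hαs
    have hα2 : α ^ 2 < N / (2 * P) := (Real.lt_sqrt hα).mp hαs
    have hα2' : α ^ 2 * (2 * P) < N := (lt_div_iff₀ h2P).mp hα2
    have hdα : 0 < N - 2 * α ^ 2 * P := by nlinarith
    rw [harg]
    have hpos : (0:ℝ) < 1 / 2 + P / N := by positivity
    have hkey : 1 / 2 + P / N ≤ 1 + (1 - α) ^ 2 * P / (N - 2 * α ^ 2 * P) := by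
      have e1 : 1 / 2 + P / N = (N + 2 * P) / (2 * N) := by field_simp
      have e2 : 1 + (1 - α) ^ 2 * P / (N - 2 * α ^ 2 * P)
          = ((N - 2 * α ^ 2 * P) + (1 - α) ^ 2 * P) / (N - 2 * α ^ 2 * P) := by
        rw [add_div' _ _ _ hdα.ne', one_mul]
      rw [e1, e2, div_le_div_iff₀ (by positivity) hdα]
      nlinarith [sq_nonneg (2 * P * α - N)]
    have := Real.logb_le_logb_of_le (by norm_num : (1:ℝ) < 2) hpos hkey
    linarith
  · rw [harg]
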